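/- arXiv:2210.06076 — 2 statements merged into one kernel-verified Lean document; each statement's English description precedes it below -/
import Mathlib

section
/- Let Q ≥ 1 and let A = (A_α)_{α ∈ Γ} ∈ ℤ^{|Γ|}, B ∈ ℤ^D. Define the complete Gauss sum S(A/Q, B/Q) = Q^{-D} Σ_{r ∈ ((0,Q] ∩ ℤ)^D} e(−Σ_α (A_α/Q) r^α − (B/Q)·r), where e(t) = e^{2πi t}. If gcd of all entries of A and B together with Q equals 1, but v := gcd(A, Q) > 1, then S(A/Q, B/Q) = 0. -/
open Finset

/-- `e(t) = exp(2πi t)`. -/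
noncomputable def eC (t : ℝ) : ℂ := Complex.exp (2 * Real.pi * Complex.I * t)

lemma eC_add (x y : ℝ) : eC (x + y) = eC x * eC y := by
  rw [eC, eC, eC, ← Complex.exp_add]; push_cast; ring_nf

lemma eC_int (n : ℤ) : eC n = 1 := by
  rw [eC]
  rw [show 2 * (Real.pi:ℂ) * Complex.I * ((n:ℤ):ℝ)
      = (n:ℤ) * (2 * Real.pi * Complex.I) by push_cast; ring]
  exact Complex.exp_int_mul_two_pi_mul_I n

lemma eC_eq_one_iff {x : ℝ} : eC x = 1 ↔ ∃ n : ℤ, x = n := by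
  rw [eC, Complex.exp_eq_one_iff]
  constructor
  · rintro ⟨n, h⟩
    refine ⟨n, ?_⟩
    have h2 : (2 * (Real.pi:ℂ) * Complex.I) ≠ 0 := by
      simp [Real.pi_ne_zero, Complex.I_ne_zero]
    have hx : (x:ℂ) = n := by
      apply mul_right_cancel₀ h2
      linear_combination h
    exact_mod_cast hx
  · rintro ⟨n, rfl⟩; exact ⟨n, by push_cast; ring⟩

/-- If gcd(A, B, Q) = 1 but v = gcd(A, Q) > 1, then the complete Gauss sum
S(A/Q, B/Q) = Q^{-D} Σ_{r ∈ {1,…,Q}^D} e(−Σ_α (A_α/Q) r^α − (B/Q)·r) vanishes. -/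
theorem stmt_3 (D : ℕ) (Q : ℕ) (hQ : 1 ≤ Q)
    (Γ : Finset (Fin D → ℕ)) (hΓ : ∀ α ∈ Γ, 2 ≤ ∑ i, α i)
    (A : (Fin D → ℕ) → ℤ) (B : Fin D → ℤ)
    (h1 : Nat.gcd (Int.gcd (Γ.gcd A) ((Finset.univ : Finset (Fin D)).gcd B)) Q = 1)
    (hv : 1 < Int.gcd (Γ.gcd A) (Q : ℤ)) :
    (1 / (Q : ℂ) ^ D) *
        ∑ r ∈ Fintype.piFinset (fun _ : Fin D => Finset.Icc (1 : ℤ) (Q : ℤ)),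
          eC (-(∑ α ∈ Γ, (A α : ℝ) / (Q : ℝ) * ∏ i, (r i : ℝ) ^ (α i))
              - ∑ i, (B i : ℝ) / (Q : ℝ) * (r i : ℝ))
      = 0 := by
  set S := Fintype.piFinset (fun _ : Fin D => Finset.Icc (1 : ℤ) (Q : ℤ)) with hS
  set f : (Fin D → ℤ) → ℂ := fun r =>
    eC (-(∑ α ∈ Γ, (A α : ℝ) / (Q : ℝ) * ∏ i, (r i : ℝ) ^ (α i))
        - ∑ i, (B i : ℝ) / (Q : ℝ) * (r i : ℝ)) with hf
  suffices hT : ∑ r ∈ S, f r = 0 by rw [hT]; ring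
  -- find a prime p dividing all A_α and Q
  obtain ⟨p, hp, hpv⟩ :=
    Nat.exists_prime_and_dvd (show Int.gcd (Γ.gcd A) (Q:ℤ) ≠ 1 by omega)
  have hpA : (p:ℤ) ∣ Γ.gcd A :=
    dvd_trans (Int.natCast_dvd_natCast.mpr hpv) (Int.gcd_dvd_left _ _)
  have hpQZ : (p:ℤ) ∣ (Q:ℤ) :=
    dvd_trans (Int.natCast_dvd_natCast.mpr hpv) (Int.gcd_dvd_right _ _)
  have hpQ : p ∣ Q := Int.natCast_dvd_natCast.mp hpQZ
  -- find a coordinate j with p ∤ B j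
  obtain ⟨j, hj⟩ : ∃ j, ¬ (p:ℤ) ∣ B j := by
    by_contra h
    push_neg at h
    have hB : (p:ℤ) ∣ (univ : Finset (Fin D)).gcd B := Finset.dvd_gcd fun i _ => h i
    have h3 : (p:ℤ) ∣ (Int.gcd (Γ.gcd A) ((univ : Finset (Fin D)).gcd B) : ℤ) :=
      Int.natCast_dvd_natCast.mpr (Int.dvd_gcd hpA hB)
    have h4 : p ∣ Nat.gcd (Int.gcd (Γ.gcd A) ((univ : Finset (Fin D)).gcd B)) Q :=
      Nat.dvd_gcd (Int.natCast_dvd_natCast.mp h3) hpQ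
    rw [h1] at h4
    exact hp.one_lt.ne' (Nat.dvd_one.mp h4)
  set m : ℕ := Q / p with hmdef
  have hQpm : Q = p * m := (Nat.mul_div_cancel' hpQ).symm
  have hm1 : 1 ≤ m := by
    rcases Nat.eq_zero_or_pos m with h0 | h; · rw [h0, mul_zero] at hQpm; omega
    · exact h
  have hp1 : 1 < p := hp.one_lt
  have hQ0 : (Q:ℝ) ≠ 0 := Nat.cast_ne_zero.mpr (by omega)
  have hp0 : (p:ℝ) ≠ 0 := Nat.cast_ne_zero.mpr (by omega)
  have hm0 : (m:ℝ) ≠ 0 := Nat.cast_ne_zero.mpr (by omega)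
  have hQZ0 : (Q:ℤ) ≠ 0 := by exact_mod_cast (by omega : Q ≠ 0)
  have hQZpos : (0:ℤ) < Q := by exact_mod_cast (by omega : 0 < Q)
  -- key shift identity
  have key : ∀ r ∈ S, eC (-(B j:ℝ)/p) * f r
      = f (Function.update r j ((r j - 1 + (m:ℤ)) % (Q:ℤ) + 1)) := by
    intro r hr
    set s : ℤ := (r j - 1 + (m:ℤ)) % (Q:ℤ) + 1 with hsdef
    have hQd : s - (r j + m) = (Q:ℤ) * (-((r j - 1 + (m:ℤ)) / Q)) := by
      rw [hsdef, Int.emod_def]; ring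
    set k : ℤ := -((r j - 1 + (m:ℤ)) / Q) with hkdef
    have hmd : (m:ℤ) ∣ s - r j := by
      have hsr : s - r j = (Q:ℤ) * k + m := by linarith [hQd]
      rw [hsr, hQpm]; push_cast
      exact dvd_add ⟨p*k, by ring⟩ ⟨1, by ring⟩
    -- polynomial part
    have hc : ∀ α, α ∈ Γ → ∃ c : ℤ,
        (A α : ℝ)/Q * ∏ i, ((Function.update r j s) i : ℝ)^(α i)
          = (A α:ℝ)/Q * ∏ i, ((r i : ℤ):ℝ)^(α i) + c := by
      intro α hα
      have hd : (Q:ℤ) ∣ A α * (∏ i, (Function.update r j s i)^(α i) - ∏ i, (r i)^(α i)) := by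
        set P : ℤ := ∏ i ∈ (univ : Finset (Fin D)) \ {j}, (r i)^(α i) with hP
        have e1 : ∏ i, (Function.update r j s i)^(α i) = s^(α j) * P := by
          rw [Finset.prod_eq_mul_prod_sdiff_singleton_of_mem (Finset.mem_univ j)
              (fun i => (Function.update r j s i)^(α i)), Function.update_self, hP]
          congr 1
          refine Finset.prod_congr rfl fun i hi => ?_
          rw [Function.update_of_ne (Finset.mem_singleton.not.mp (Finset.mem_sdiff.mp hi).2)]
        have e2 : ∏ i, (r i)^(α i) = (r j)^(α j) * P :=
          Finset.prod_eq_mul_prod_sdiff_singleton_of_mem (Finset.mem_univ j) _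
        rw [e1, e2,
          show A α * (s ^ α j * P - r j ^ α j * P)
            = (A α * (s ^ α j - r j ^ α j)) * P by ring]
        apply Dvd.dvd.mul_right
        rw [hQpm]; push_cast
        exact mul_dvd_mul (dvd_trans hpA (Finset.gcd_dvd hα))
          (dvd_trans hmd (sub_dvd_pow_sub_pow s (r j) (α j)))
      obtain ⟨c, hc'⟩ := hd
      refine ⟨c, ?_⟩
      have hcast := congrArg (Int.cast : ℤ → ℝ) hc'
      push_cast at hcast
      field_simp
      linear_combination hcast
    choose! c hc using hc
    have hpoly : ∑ α ∈ Γ, (A α:ℝ)/Q * ∏ i, ((Function.update r j s) i : ℝ)^(α i)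
        = ∑ α ∈ Γ, (A α:ℝ)/Q * ∏ i, ((r i : ℤ):ℝ)^(α i) + ((∑ α ∈ Γ, c α : ℤ):ℝ) := by
      push_cast
      rw [← Finset.sum_add_distrib]
      exact Finset.sum_congr rfl hc
    have hlin : ∑ i, (B i:ℝ)/Q * ((Function.update r j s) i : ℝ)
        = ∑ i, (B i:ℝ)/Q * ((r i : ℤ):ℝ) + (B j:ℝ)*m/Q + ((B j * k : ℤ):ℝ) := by
      rw [Finset.sum_eq_sum_sdiff_singleton_add (Finset.mem_univ j)
            (fun i => (B i:ℝ)/Q * ((Function.update r j s) i : ℝ)),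
          Finset.sum_eq_sum_sdiff_singleton_add (Finset.mem_univ j)
            (fun i => (B i:ℝ)/Q * ((r i : ℤ):ℝ))]
      have hcongr : ∀ i ∈ (univ : Finset (Fin D)) \ {j},
          (B i:ℝ)/Q * ((Function.update r j s) i : ℝ) = (B i:ℝ)/Q * ((r i : ℤ):ℝ) :=
        fun i hi => by
          rw [Function.update_of_ne (Finset.mem_singleton.not.mp (Finset.mem_sdiff.mp hi).2)]
      rw [Finset.sum_congr rfl hcongr, Function.update_self]
      have hs' : ((s:ℤ):ℝ) = (r j : ℝ) + m + Q * k := by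
        have := congrArg (Int.cast : ℤ → ℝ) hQd
        push_cast at this ⊢
        rw [hkdef] at *
        push_cast at this ⊢
        linarith
      rw [hs']
      push_cast
      field_simp
      ring
    -- assemble
    have hQR : (Q:ℝ) = (p:ℝ) * m := by rw [hQpm]; push_cast; ring
    have hE : (-(∑ α ∈ Γ, (A α : ℝ)/Q * ∏ i, ((Function.update r j s) i : ℝ)^(α i))
        - ∑ i, (B i:ℝ)/Q * ((Function.update r j s) i : ℝ))
        = (-(B j:ℝ)/p) + ((-(∑ α ∈ Γ, (A α:ℝ)/Q * ∏ i, ((r i : ℤ):ℝ)^(α i))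
              - ∑ i, (B i:ℝ)/Q * ((r i : ℤ):ℝ))
            + (((-(∑ α ∈ Γ, c α) - B j * k) : ℤ):ℝ)) := by
      rw [hpoly, hlin]
      push_cast
      rw [hQR]
      field_simp
      ring
    simp only [hf]
    rw [hE, eC_add, eC_add, eC_int, mul_one]
  -- the reindexing bijection
  have hmem : ∀ t : ℤ, t % (Q:ℤ) + 1 ∈ Finset.Icc (1:ℤ) (Q:ℤ) := by
    intro t
    have h0 : 0 ≤ t % (Q:ℤ) := Int.emod_nonneg t hQZ0
    have h2 : t % (Q:ℤ) < Q := Int.emod_lt_of_pos t hQZpos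
    rw [Finset.mem_Icc]; omega
  have hinv : ∀ a b : ℤ, 1 ≤ a → a ≤ (Q:ℤ) →
      ((a - 1 + b) % (Q:ℤ) + 1 - 1 + (-b)) % (Q:ℤ) + 1 = a := by
    intro a b ha haQ
    rw [show ((a - 1 + b) % (Q:ℤ) + 1 - 1 + (-b)) = (a-1+b) % (Q:ℤ) - b by ring]
    rw [Int.sub_emod ((a-1+b) % (Q:ℤ)) b, Int.emod_emod_of_dvd _ dvd_rfl, ← Int.sub_emod]
    rw [show a - 1 + b - b = a - 1 by ring, Int.emod_eq_of_lt (by omega) (by omega)]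
    ring
  have hbij : ∑ r ∈ S, eC (-(B j:ℝ)/p) * f r = ∑ r ∈ S, f r := by
    refine Finset.sum_nbij'
      (fun r => Function.update r j ((r j - 1 + (m:ℤ)) % (Q:ℤ) + 1))
      (fun r => Function.update r j ((r j - 1 + -(m:ℤ)) % (Q:ℤ) + 1))
      ?_ ?_ ?_ ?_ key
    · intro r hr
      rw [hS, Fintype.mem_piFinset] at hr ⊢
      intro i
      beta_reduce
      rcases eq_or_ne i j with rfl | hne
      · rw [Function.update_self]; exact hmem _
      · rw [Function.update_of_ne hne]; exact hr i
    · intro r hr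
      rw [hS, Fintype.mem_piFinset] at hr ⊢
      intro i
      beta_reduce
      rcases eq_or_ne i j with rfl | hne
      · rw [Function.update_self]; exact hmem _
      · rw [Function.update_of_ne hne]; exact hr i
    · intro r hr
      rw [hS, Fintype.mem_piFinset] at hr
      have hrj := Finset.mem_Icc.mp (hr j)
      beta_reduce
      funext i
      rcases eq_or_ne i j with rfl | hne
      · simp only [Function.update_self]
        exact hinv (r i) (m:ℤ) hrj.1 hrj.2
      · rw [Function.update_of_ne hne, Function.update_of_ne hne]
    · intro r hr
      rw [hS, Fintype.mem_piFinset] at hr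
      have hrj := Finset.mem_Icc.mp (hr j)
      beta_reduce
      funext i
      rcases eq_or_ne i j with rfl | hne
      · simp only [Function.update_self]
        have := hinv (r i) (-(m:ℤ)) hrj.1 hrj.2
        rwa [neg_neg] at this
      · rw [Function.update_of_ne hne, Function.update_of_ne hne]
  have h2 : (eC (-(B j:ℝ)/p) - 1) * (∑ r ∈ S, f r) = 0 := by
    rw [sub_mul, one_mul, Finset.mul_sum, hbij, sub_self]
  rcases mul_eq_zero.mp h2 with h3 | h3
  · exfalso
    obtain ⟨n, hn⟩ := eC_eq_one_iff.mp (sub_eq_zero.mp h3)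
    apply hj
    have hBj : (B j : ℝ) = -(n * p) := by field_simp at hn; linarith
    have hBj' : B j = -(n * p) := by exact_mod_cast hBj
    exact ⟨-n, by rw [hBj']; ring⟩
  · exact h3
end

section
/- Condensation of singularities: let 0 < ε ≪ δ ≪ 1 and N ≫ δ^{-1}. Suppose there is a set H ⊂ {1,…,N} with |H| ≥ δN such that ‖n α₀‖_𝕋 ≤ ε for all n ∈ H, for some real α₀. Then there exists a positive integer q ≤ δ^{-1} such that ‖q α₀‖_𝕋 ≤ C · ε · q / (δ N) for an absolute constant C. -/
set_option maxHeartbeats 1000000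
open Finset

noncomputable def torusNorm (x : ℝ) : ℝ := |x - (round x : ℤ)|

lemma torusNorm_le (x : ℝ) (m : ℤ) : torusNorm x ≤ |x - m| := round_le x m

lemma torusNorm_neg (x : ℝ) : torusNorm (-x) = torusNorm x := by
  apply le_antisymm
  · calc torusNorm (-x) ≤ |(-x) - (-(round x : ℤ) : ℤ)| := torusNorm_le _ _
      _ = |x - (round x : ℤ)| := by push_cast; rw [← abs_neg]; ring_nf
      _ = torusNorm x := rfl
  · calc torusNorm x ≤ |x - (-(round (-x) : ℤ) : ℤ)| := torusNorm_le _ _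
      _ = |(-x) - (round (-x) : ℤ)| := by push_cast; rw [← abs_neg]; ring_nf
      _ = torusNorm (-x) := rfl

lemma gap_pigeon (N L : ℕ) (H : Finset ℕ) (hH : H ⊆ Finset.Icc 1 N) (hL : 0 < L)
    (hcard : (N-1)/L + 1 < H.card) :
    ∃ n₁ ∈ H, ∃ n₂ ∈ H, n₁ < n₂ ∧ n₂ - n₁ ≤ L - 1 := by
  have maps : ∀ n ∈ H, (n-1)/L ∈ Finset.range ((N-1)/L + 1) := by
    intro n hn
    simp only [Finset.mem_range, Nat.lt_succ_iff]
    exact Nat.div_le_div_right (Nat.sub_le_sub_right (Finset.mem_Icc.mp (hH hn)).2 1)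
  obtain ⟨x, hx, y, hy, hxy, hfe⟩ :=
    Finset.exists_ne_map_eq_of_card_lt_of_maps_to (by simpa using hcard) maps
  have key : ∀ a b : ℕ, a ∈ H → b ∈ H → a < b → (a-1)/L = (b-1)/L → b - a ≤ L - 1 := by
    intro a b ha hb hab he
    have ha1 : 1 ≤ a := (Finset.mem_Icc.mp (hH ha)).1
    have h1 : (a-1)/L * L ≤ a - 1 := Nat.div_mul_le_self _ _
    have h2 : b - 1 < ((a-1)/L + 1) * L := by
      rw [← Nat.div_lt_iff_lt_mul hL, ← he]; omega
    have h3 : ((a-1)/L + 1) * L = (a-1)/L * L + L := by ring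
    omega
  rcases lt_or_gt_of_ne hxy with h | h
  · exact ⟨x, hx, y, hy, h, key x y hx hy h hfe⟩
  · exact ⟨y, hy, x, hx, h, key y x hy hx h hfe.symm⟩

lemma counting (N : ℕ) (δ εp σ : ℝ) (H : Finset ℕ) (hH : H ⊆ Finset.Icc 1 N)
    (hδ : 0 < δ) (hδ1 : δ ≤ 1)
    (hδN : 100 ≤ δ * N) (hcard : δ * N ≤ (H.card : ℝ)) (hσ0 : 0 < σ)
    (hσ : σ ≤ δ^2/50) (hεp : 0 < εp)
    (hεpδ : εp ≤ 3*δ/100)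
    (hnear : ∀ n ∈ H, torusNorm ((n:ℝ) * σ) ≤ εp) :
    σ ≤ 20 * εp / (δ * N) := by
  by_contra hc
  push_neg at hc
  have hδN0 : (0:ℝ) < δ * N := by linarith
  have hN0 : (0:ℝ) < N := by nlinarith [Nat.cast_nonneg (α := ℝ) N]
  set f : ℕ → ℤ := fun n => round ((n:ℝ) * σ) with hf
  have key : ∀ n ∈ H, |(n:ℝ) * σ - f n| ≤ εp := fun n hn => hnear n hn
  set b : ℕ := ⌈2*εp/σ⌉₊ with hb
  -- fiber bound
  have fiber : ∀ k ∈ H.image f, (H.filter (fun n => f n = k)).card ≤ b + 1 := by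
    intro k hk
    set s := H.filter (fun n => f n = k) with hs
    obtain ⟨n₀, hn₀, hfn₀⟩ := Finset.mem_image.mp hk
    have hsne : s.Nonempty := ⟨n₀, Finset.mem_filter.mpr ⟨hn₀, hfn₀⟩⟩
    set m := s.min' hsne with hm
    have hms : m ∈ s := s.min'_mem hsne
    have hsub : s ⊆ Finset.Icc m (m + b) := by
      intro n hn
      have hnH := (Finset.mem_filter.mp hn).1
      have hfn := (Finset.mem_filter.mp hn).2
      have hmH := (Finset.mem_filter.mp hms).1
      have hfm := (Finset.mem_filter.mp hms).2
      have h1 : |(n:ℝ) * σ - k| ≤ εp := by rw [← hfn]; exact key n hnH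
      have h2 : |(m:ℝ) * σ - k| ≤ εp := by rw [← hfm]; exact key m hmH
      have hmn : m ≤ n := s.min'_le n hn
      have h3 : ((n:ℝ) - m) * σ ≤ 2 * εp := by
        have := abs_sub_abs_le_abs_sub ((n:ℝ)*σ - k) ((m:ℝ)*σ - k)
        have h4 : (n:ℝ)*σ - k - ((m:ℝ)*σ - k) = ((n:ℝ) - m)*σ := by ring
        calc ((n:ℝ) - m) * σ ≤ |((n:ℝ) - m)*σ| := le_abs_self _
          _ = |(n:ℝ)*σ - k - ((m:ℝ)*σ - k)| := by rw [h4]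
          _ ≤ |(n:ℝ)*σ - k| + |(m:ℝ)*σ - k| := abs_sub _ _
          _ ≤ 2 * εp := by linarith
      have h5 : (n:ℝ) - m ≤ 2*εp/σ := by
        rw [le_div_iff₀ hσ0]; nlinarith
      have h6 : (n:ℝ) ≤ (m + b : ℕ) := by
        push_cast
        have := Nat.le_ceil (2*εp/σ)
        have hmr : ((m:ℕ):ℝ) = (m:ℝ) := rfl
        linarith
      exact Finset.mem_Icc.mpr ⟨hmn, by exact_mod_cast h6⟩
    calc s.card ≤ (Finset.Icc m (m+b)).card := Finset.card_le_card hsub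
      _ = b + 1 := by rw [Nat.card_Icc]; omega
  have hmain := Finset.card_le_mul_card_image (f := f) H (b+1) fiber
  -- image bound
  have himsub : H.image f ⊆ Finset.Icc (0:ℤ) ⌈(N:ℝ)*σ⌉ := by
    intro k hk
    obtain ⟨n, hn, rfl⟩ := Finset.mem_image.mp hk
    have hn1 : 1 ≤ n := (Finset.mem_Icc.mp (hH hn)).1
    have hnN : n ≤ N := (Finset.mem_Icc.mp (hH hn)).2
    rw [Finset.mem_Icc]
    constructor
    · have : (0:ℝ) ≤ (n:ℝ)*σ := by positivity
      show (0:ℤ) ≤ round ((n:ℝ)*σ)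
      rw [round_eq]
      exact Int.floor_nonneg.mpr (by linarith)
    · show round ((n:ℝ)*σ) ≤ ⌈(N:ℝ)*σ⌉
      rw [round_eq]
      have hle : (n:ℝ)*σ ≤ (N:ℝ)*σ := by
        have : (n:ℝ) ≤ N := by exact_mod_cast hnN
        nlinarith
      have hceil := Int.le_ceil ((N:ℝ)*σ)
      have : ⌊(n:ℝ)*σ + 1/2⌋ < ⌈(N:ℝ)*σ⌉ + 1 := by
        rw [Int.floor_lt]
        push_cast
        linarith
      omega
  have hceil1 : (⌈(N:ℝ)*σ⌉ : ℝ) < (N:ℝ)*σ + 1 := Int.ceil_lt_add_one _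
  have hceil0 : (0:ℤ) ≤ ⌈(N:ℝ)*σ⌉ := Int.ceil_nonneg (by positivity)
  have himcard : ((H.image f).card : ℝ) ≤ (N:ℝ)*σ + 2 := by
    have h1 : (H.image f).card ≤ (Finset.Icc (0:ℤ) ⌈(N:ℝ)*σ⌉).card :=
      Finset.card_le_card himsub
    have h2 : (Finset.Icc (0:ℤ) ⌈(N:ℝ)*σ⌉).card = (⌈(N:ℝ)*σ⌉ + 1).toNat := by
      rw [Int.card_Icc]; ring_nf
    have h4 : (0:ℤ) ≤ ⌈(N:ℝ)*σ⌉ + 1 := by linarith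
    have h5 : (((⌈(N:ℝ)*σ⌉ + 1).toNat : ℕ) : ℝ) = (⌈(N:ℝ)*σ⌉:ℝ) + 1 := by
      have h6 := Int.toNat_of_nonneg h4
      exact_mod_cast h6
    calc ((H.image f).card : ℝ) ≤ (((⌈(N:ℝ)*σ⌉ + 1).toNat : ℕ) : ℝ) := by
          rw [← h2]; exact_mod_cast h1
      _ = (⌈(N:ℝ)*σ⌉:ℝ) + 1 := h5
      _ ≤ (N:ℝ)*σ + 2 := by linarith
  have hBr : (b:ℝ) ≤ 2*εp/σ + 1 := by
    have := Nat.ceil_lt_add_one (show (0:ℝ) ≤ 2*εp/σ by positivity)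
    linarith
  have hfinal : (H.card : ℝ) ≤ ((b:ℝ)+1) * ((H.image f).card:ℝ) := by exact_mod_cast hmain
  have hmul : (H.card:ℝ) ≤ (2*εp/σ + 2) * ((N:ℝ)*σ + 2) := by
    calc (H.card:ℝ) ≤ ((b:ℝ)+1) * ((H.image f).card:ℝ) := hfinal
      _ ≤ (2*εp/σ + 2) * ((N:ℝ)*σ + 2) :=
          mul_le_mul (by linarith) himcard (Nat.cast_nonneg _) (by positivity)
  have e2 : 2*εp/σ*((N:ℝ)*σ) = 2*εp*N := by field_simp
  have e1 : (2*εp/σ + 2) * ((N:ℝ)*σ + 2) = 2*εp*N + 4*εp/σ + 2*((N:ℝ)*σ) + 4 := by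
    rw [← e2]; ring
  have hc' : 20*εp < σ * (δ*N) := by rwa [div_lt_iff₀ hδN0] at hc
  have e3 : 4*εp/σ ≤ δ*N/5 := by
    rw [div_le_iff₀ hσ0]
    nlinarith [hc', hσ0.le]
  have hδ2 : δ^2 ≤ δ := by nlinarith
  have e4 : 2*εp*N ≤ 6/100*(δ*N) := by
    linarith [mul_le_mul_of_nonneg_left hεpδ hN0.le]
  have e5 : 2*((N:ℝ)*σ) ≤ (δ*N)/25 := by
    linarith [mul_le_mul_of_nonneg_left hσ hN0.le, mul_le_mul_of_nonneg_left hδ2 hN0.le]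
  have e6 : (4:ℝ) ≤ (δ*N)/25 := by linarith
  linarith [hmul, hcard, e1]

section Main
variable {δ ε α₀ : ℝ} {N : ℕ} {H : Finset ℕ}

private theorem stmt_10_aux (hε : 0 < ε) (hεδ : ε ≤ δ ^ 2 / 100) (hδ : 0 < δ) (hδ1 : δ < 1)
    (hN : (100 / δ ^ 2 : ℝ) ≤ N) (hH : H ⊆ Finset.Icc 1 N)
    (hcard : δ * N ≤ (H.card : ℝ))
    (hnear : ∀ n ∈ H, torusNorm ((n : ℝ) * α₀) ≤ ε) :
    ∃ q : ℕ, 1 ≤ q ∧ (q : ℝ) ≤ δ⁻¹ ∧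
      torusNorm ((q : ℝ) * α₀) ≤ 20 * ε * q / (δ * N) := by
  have hNpos : (0:ℝ) < N := lt_of_lt_of_le (by positivity) hN
  have hδN : 100 ≤ δ * N := by
    have h1 : δ * (100/δ^2) ≤ δ * N := mul_le_mul_of_nonneg_left hN hδ.le
    have h2 : δ * (100/δ^2) = 100/δ := by field_simp
    have h3 : (100:ℝ) ≤ 100/δ := by rw [le_div_iff₀ hδ]; nlinarith
    linarith
  have hδNpos : (0:ℝ) < δ * N := by linarith
  have hinv : (1:ℝ) ≤ 1/δ := by rw [le_div_iff₀ hδ]; linarith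
  -- Step 1: pigeonhole for a small gap
  set L := ⌈(2:ℝ)/δ⌉₊ with hLdef
  have hL2 : (2:ℝ)/δ ≤ L := Nat.le_ceil _
  have hLpos : 0 < L := by
    rw [hLdef, Nat.ceil_pos]; positivity
  have hL3 : (L:ℝ) ≤ 3/δ := by
    have := Nat.ceil_lt_add_one (show (0:ℝ) ≤ 2/δ by positivity)
    have : (L:ℝ) < 2/δ + 1 := this
    have h4 : (2:ℝ)/δ + 1 ≤ 3/δ := by
      have : (1:ℝ)/δ + 2/δ = 3/δ := by ring
      linarith
    linarith
  have hLposR : (0:ℝ) < L := by exact_mod_cast hLpos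
  have hpig_card : ((N-1)/L + 1 : ℕ) < H.card := by
    have c1 : (((N-1)/L : ℕ):ℝ) ≤ ((N-1 : ℕ):ℝ)/(L:ℝ) := Nat.cast_div_le
    have c2 : ((N-1:ℕ):ℝ) ≤ (N:ℝ) := by
      have : (N-1:ℕ) ≤ N := Nat.sub_le _ _
      exact_mod_cast this
    have c3 : (N:ℝ)/(L:ℝ) ≤ δ * N / 2 := by
      have h5 : (N:ℝ)/(L:ℝ) ≤ (N:ℝ)/((2:ℝ)/δ) :=
        div_le_div_of_nonneg_left hNpos.le (by positivity) hL2
      have h6 : (N:ℝ)/((2:ℝ)/δ) = δ * N / 2 := by field_simp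
      linarith
    have c4 : (((N-1)/L + 1 : ℕ):ℝ) < (H.card : ℝ) := by
      push_cast
      have c5 : ((N-1:ℕ):ℝ)/(L:ℝ) ≤ (N:ℝ)/(L:ℝ) :=
        div_le_div_of_nonneg_right c2 hLposR.le
      calc (((N-1)/L : ℕ):ℝ) + 1 ≤ (N:ℝ)/(L:ℝ) + 1 := by linarith
          _ ≤ δ * N / 2 + 1 := by linarith
          _ < δ * N := by linarith
          _ ≤ H.card := hcard
    exact_mod_cast c4
  obtain ⟨n₁, hn₁, n₂, hn₂, hlt, hgap⟩ := gap_pigeon N L H hH hLpos hpig_card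
  set q₁ : ℕ := n₂ - n₁ with hq₁def
  have hq₁pos : 0 < q₁ := by omega
  have hq₁posR : (0:ℝ) < q₁ := by exact_mod_cast hq₁pos
  have hq₁L : (q₁:ℝ) ≤ 3/δ := by
    have h1 : q₁ ≤ L := by omega
    have h2 : (q₁:ℝ) ≤ L := by exact_mod_cast h1
    linarith
  have hq₁cast : (q₁:ℝ) = (n₂:ℝ) - (n₁:ℝ) := by
    rw [hq₁def]; push_cast [Nat.cast_sub hlt.le]; ring
  set a : ℤ := round ((n₂:ℝ)*α₀) - round ((n₁:ℝ)*α₀) with ha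
  have hq₁a : |(q₁:ℝ)*α₀ - a| ≤ 2*ε := by
    have t2 : |(n₂:ℝ)*α₀ - (round ((n₂:ℝ)*α₀) : ℤ)| ≤ ε := hnear n₂ hn₂
    have t1 : |(n₁:ℝ)*α₀ - (round ((n₁:ℝ)*α₀) : ℤ)| ≤ ε := hnear n₁ hn₁
    rw [hq₁cast, ha]
    push_cast
    have hring : ((n₂:ℝ) - n₁)*α₀ - ((round ((n₂:ℝ)*α₀) : ℤ) - (round ((n₁:ℝ)*α₀) : ℤ)) =
        ((n₂:ℝ)*α₀ - (round ((n₂:ℝ)*α₀) : ℤ)) - ((n₁:ℝ)*α₀ - (round ((n₁:ℝ)*α₀) : ℤ)) := by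
      ring
    rw [hring]
    calc |_ - _| ≤ |(n₂:ℝ)*α₀ - (round ((n₂:ℝ)*α₀) : ℤ)| + |(n₁:ℝ)*α₀ - (round ((n₁:ℝ)*α₀) : ℤ)| :=
          abs_sub _ _
      _ ≤ 2*ε := by linarith
  -- Step 2: reduce the fraction a/q₁
  set d : ℕ := Int.gcd a (q₁:ℤ) with hd
  have hdposZ : 0 < d := by
    rw [hd]
    exact Int.gcd_pos_of_ne_zero_right a (by exact_mod_cast hq₁pos.ne')
  have hdq : d ∣ q₁ := by
    have h : ((d:ℕ) : ℤ) ∣ (q₁:ℤ) := by rw [hd]; exact Int.gcd_dvd_right _ _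
    exact_mod_cast h
  have hda : (d:ℤ) ∣ a := by rw [hd]; exact Int.gcd_dvd_left _ _
  set q₂ : ℕ := q₁ / d with hq₂def
  set a₂ : ℤ := a / (d:ℤ) with ha₂def
  have hq₂pos : 0 < q₂ := Nat.div_pos (Nat.le_of_dvd hq₁pos hdq) hdposZ
  have hq₂posR : (0:ℝ) < q₂ := by exact_mod_cast hq₂pos
  have hq₂q₁ : q₂ ≤ q₁ := Nat.div_le_self _ _
  have hq₂q₁R : (q₂:ℝ) ≤ q₁ := by exact_mod_cast hq₂q₁
  have hq₂d : q₂ * d = q₁ := Nat.div_mul_cancel hdq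
  have ha₂d : a₂ * (d:ℤ) = a := Int.ediv_mul_cancel hda
  have hfrac : (a₂:ℝ)/(q₂:ℝ) = (a:ℝ)/(q₁:ℝ) := by
    rw [div_eq_div_iff hq₂posR.ne' hq₁posR.ne']
    have : a₂ * (q₁:ℤ) = a * (q₂:ℤ) := by
      calc a₂ * (q₁:ℤ) = a₂ * ((q₂:ℤ) * (d:ℤ)) := by rw [← hq₂d]; push_cast; ring
        _ = (a₂ * (d:ℤ)) * q₂ := by ring
        _ = a * q₂ := by rw [ha₂d]
    exact_mod_cast this
  set β : ℝ := α₀ - (a₂:ℝ)/(q₂:ℝ) with hβdef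
  have hβ2 : |β| ≤ 2*ε/q₁ := by
    rw [hβdef, hfrac]
    have h1 : α₀ - (a:ℝ)/(q₁:ℝ) = ((q₁:ℝ)*α₀ - a)/q₁ := by field_simp
    rw [h1, abs_div, abs_of_pos hq₁posR]
    exact div_le_div_of_nonneg_right hq₁a hq₁posR.le
  have hcop : Int.gcd a₂ (q₂:ℤ) = 1 := by
    have hq2cast : ((q₂:ℕ):ℤ) = (q₁:ℤ)/(d:ℤ) := by
      rw [hq₂def]; exact Int.natCast_div q₁ d
    rw [ha₂def, hq2cast, hd]
    exact Int.gcd_div_gcd_div_gcd (by rw [← hd]; exact_mod_cast hdposZ)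
  -- Steps 3-4: β is very small via the counting lemma
  have hβbound : |β| ≤ 20 * ε / (δ * N) := by
    rcases eq_or_ne β 0 with h0 | h0
    · rw [h0, abs_zero]; positivity
    · set σ : ℝ := (q₂:ℝ) * |β| with hσdef
      have hσpos : 0 < σ := mul_pos hq₂posR (abs_pos.mpr h0)
      have hσle : σ ≤ δ^2/50 := by
        have h1 : σ ≤ (q₂:ℝ) * (2*ε/q₁) := mul_le_mul_of_nonneg_left hβ2 hq₂posR.le
        have h2 : (q₂:ℝ) * (2*ε/q₁) ≤ 2*ε := by
          rw [← mul_div_assoc, div_le_iff₀ hq₁posR]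
          nlinarith
        linarith
      have hεppos : 0 < (q₂:ℝ)*ε := by positivity
      have hεple : (q₂:ℝ)*ε ≤ 3*δ/100 := by
        have h1 : (q₂:ℝ)*ε ≤ (3/δ)*ε := by nlinarith
        have h2 : (3/δ)*ε ≤ (3/δ)*(δ^2/100) := mul_le_mul_of_nonneg_left hεδ (by positivity)
        have h3 : (3/δ)*(δ^2/100) = 3*δ/100 := by field_simp
        linarith
      have hnear' : ∀ n ∈ H, torusNorm ((n:ℝ) * σ) ≤ (q₂:ℝ)*ε := by
        intro n hn
        have h1 : |(n:ℝ)*α₀ - (round ((n:ℝ)*α₀) : ℤ)| ≤ ε := hnear n hn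
        set m : ℤ := round ((n:ℝ)*α₀) with hm
        have key : torusNorm ((n:ℝ) * ((q₂:ℝ)*β)) ≤ (q₂:ℝ)*ε := by
          have h2 : (n:ℝ) * ((q₂:ℝ)*β) - (((q₂:ℤ) * m - (n:ℤ) * a₂ : ℤ):ℝ) =
              (q₂:ℝ) * ((n:ℝ)*α₀ - m) := by
            rw [hβdef]; push_cast; field_simp; ring
          calc torusNorm ((n:ℝ) * ((q₂:ℝ)*β))
              ≤ |(n:ℝ) * ((q₂:ℝ)*β) - (((q₂:ℤ) * m - (n:ℤ) * a₂ : ℤ):ℝ)| := torusNorm_le _ _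
            _ = (q₂:ℝ) * |(n:ℝ)*α₀ - m| := by rw [h2, abs_mul, abs_of_pos hq₂posR]
            _ ≤ (q₂:ℝ)*ε := mul_le_mul_of_nonneg_left h1 hq₂posR.le
        rcases abs_cases β with ⟨hb, _⟩ | ⟨hb, _⟩
        · have he : (n:ℝ) * σ = (n:ℝ) * ((q₂:ℝ)*β) := by rw [hσdef, hb]
          rw [he]; exact key
        · have he : (n:ℝ) * σ = -((n:ℝ) * ((q₂:ℝ)*β)) := by rw [hσdef, hb]; ring
          rw [he, torusNorm_neg]; exact key
      have hcnt := counting N δ ((q₂:ℝ)*ε) σ H hH hδ hδ1.le hδN hcard hσpos hσle hεppos hεple hnear'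
      rw [hσdef] at hcnt
      have h4 : 20 * ((q₂:ℝ)*ε) / (δ*N) = (q₂:ℝ) * (20*ε/(δ*N)) := by ring
      rw [h4] at hcnt
      exact le_of_mul_le_mul_left hcnt hq₂posR
  -- Step 5: q₂ divides every element of H
  have hdvd : ∀ n ∈ H, q₂ ∣ n := by
    intro n hn
    have hn1 : 1 ≤ n := (Finset.mem_Icc.mp (hH hn)).1
    have hnN : n ≤ N := (Finset.mem_Icc.mp (hH hn)).2
    have hnNR : (n:ℝ) ≤ N := by exact_mod_cast hnN
    set m : ℤ := round ((n:ℝ)*α₀) with hm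
    have h1 : |(n:ℝ)*α₀ - m| ≤ ε := hnear n hn
    have hnβ : |(n:ℝ)*β| ≤ 20*ε/δ := by
      rw [abs_mul, abs_of_nonneg (Nat.cast_nonneg n)]
      calc (n:ℝ) * |β| ≤ (N:ℝ) * (20*ε/(δ*N)) :=
            mul_le_mul hnNR hβbound (abs_nonneg _) hNpos.le
        _ = 20*ε/δ := by field_simp
    have h2 : |(n:ℝ)*a₂ - m*q₂| < 1 := by
      have he : (n:ℝ)*a₂ - m*q₂ = (q₂:ℝ) * (((n:ℝ)*α₀ - m) - (n:ℝ)*β) := by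
        rw [hβdef]; field_simp; ring
      have h3 : |(n:ℝ)*a₂ - m*(q₂:ℝ)| ≤ (q₂:ℝ) * (ε + 20*ε/δ) := by
        rw [he, abs_mul, abs_of_pos hq₂posR]
        apply mul_le_mul_of_nonneg_left ?_ hq₂posR.le
        calc |((n:ℝ)*α₀ - m) - (n:ℝ)*β| ≤ |(n:ℝ)*α₀ - m| + |(n:ℝ)*β| := abs_sub _ _
          _ ≤ ε + 20*ε/δ := by linarith
      have h4 : ε + 20*ε/δ ≤ 21*(δ/100) := by
        have h5 : ε/δ ≤ δ/100 := by rw [div_le_div_iff₀ hδ (by norm_num : (0:ℝ) < 100)]; nlinarith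
        have h6 : ε ≤ ε/δ := by
          rw [le_div_iff₀ hδ]; nlinarith
        have h7 : 20*ε/δ = 20*(ε/δ) := by ring
        linarith
      have h8 : (q₂:ℝ) * (ε + 20*ε/δ) ≤ (3/δ)*(21*(δ/100)) := by
        apply mul_le_mul (le_trans hq₂q₁R hq₁L) h4 (by positivity) (by positivity)
      have h9 : (3/δ)*(21*(δ/100)) = 63/100 := by field_simp; ring
      linarith
    have h10 : (n:ℤ)*a₂ - m*(q₂:ℤ) = 0 := by
      have h11 : |((n:ℤ)*a₂ - m*(q₂:ℤ) : ℤ)| < 1 := by exact_mod_cast h2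
      rw [abs_lt] at h11
      omega
    have h12 : ((q₂:ℤ)) ∣ (n:ℤ) * a₂ := ⟨m, by linarith [h10]⟩
    have h13 : ((q₂:ℤ)) ∣ (n:ℤ) := by
      apply Int.dvd_of_dvd_mul_left_of_gcd_one h12
      rw [Int.gcd_comm]; exact hcop
    exact_mod_cast h13
  -- Step 6: q₂ ≤ δ⁻¹
  have hq₂inv : (q₂:ℝ) ≤ δ⁻¹ := by
    have hmaps : ∀ n ∈ H, n / q₂ ∈ Finset.Icc 1 (N / q₂) := by
      intro n hn
      have hn1 : 1 ≤ n := (Finset.mem_Icc.mp (hH hn)).1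
      have hnN : n ≤ N := (Finset.mem_Icc.mp (hH hn)).2
      have hq2n : q₂ ≤ n := Nat.le_of_dvd (by omega) (hdvd n hn)
      exact Finset.mem_Icc.mpr ⟨(Nat.one_le_div_iff hq₂pos).mpr hq2n, Nat.div_le_div_right hnN⟩
    have hinj : Set.InjOn (· / q₂) H := by
      intro x hx y hy hxy
      have dx := Nat.div_mul_cancel (hdvd x hx)
      have dy := Nat.div_mul_cancel (hdvd y hy)
      simp only at hxy
      calc x = x/q₂*q₂ := dx.symm
        _ = y/q₂*q₂ := by rw [hxy]
        _ = y := dy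
    have hc : H.card ≤ (Finset.Icc 1 (N/q₂)).card := Finset.card_le_card_of_injOn _ hmaps hinj
    have hc2 : (Finset.Icc 1 (N/q₂)).card = N/q₂ := by rw [Nat.card_Icc, Nat.add_sub_cancel]
    have hc3 : (H.card:ℝ) ≤ ((N/q₂ : ℕ):ℝ) := by rw [← hc2]; exact_mod_cast hc
    have hc4 : ((N/q₂:ℕ):ℝ) ≤ (N:ℝ)/(q₂:ℝ) := Nat.cast_div_le
    have h5 : δ * N * q₂ ≤ N := by
      have h6 : δ * N ≤ (N:ℝ)/q₂ := by linarith
      rw [le_div_iff₀ hq₂posR] at h6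
      linarith
    rw [inv_eq_one_div, le_div_iff₀ hδ]
    nlinarith
  refine ⟨q₂, hq₂pos, hq₂inv, ?_⟩
  have heq : (q₂:ℝ)*α₀ - a₂ = (q₂:ℝ) * β := by rw [hβdef]; field_simp
  calc torusNorm ((q₂:ℝ)*α₀) ≤ |(q₂:ℝ)*α₀ - a₂| := torusNorm_le _ _
    _ = (q₂:ℝ) * |β| := by rw [heq, abs_mul, abs_of_pos hq₂posR]
    _ ≤ (q₂:ℝ) * (20*ε/(δ*N)) := mul_le_mul_of_nonneg_left hβbound hq₂posR.le
    _ = 20*ε*(q₂:ℝ)/(δ*N) := by ring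

end Main


/-- Condensation of singularities: if `‖n α₀‖_𝕋 ≤ ε` for all `n` in a set
`H ⊆ {1,…,N}` of size at least `δN` (with `ε ≤ δ²/100` and `N ≥ 100/δ²`), then there is
`q ≤ δ⁻¹` with `‖q α₀‖_𝕋 ≤ C ε q/(δN)` for an absolute constant `C`. -/
theorem stmt_10 :
    ∃ C : ℝ, 0 < C ∧ ∀ (δ ε : ℝ) (N : ℕ) (α₀ : ℝ) (H : Finset ℕ),
      0 < ε → ε ≤ δ ^ 2 / 100 → 0 < δ → δ < 1 → (100 / δ ^ 2 : ℝ) ≤ N →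
      H ⊆ Finset.Icc 1 N → δ * N ≤ (H.card : ℝ) →
      (∀ n ∈ H, torusNorm ((n : ℝ) * α₀) ≤ ε) →
      ∃ q : ℕ, 1 ≤ q ∧ (q : ℝ) ≤ δ⁻¹ ∧
        torusNorm ((q : ℝ) * α₀) ≤ C * ε * q / (δ * N) := by
  refine ⟨20, by norm_num, ?_⟩
  intro δ ε N α₀ H hε hεδ hδ hδ1 hN hH hcard hnear
  exact stmt_10_aux hε hεδ hδ hδ1 hN hH hcard hnear
end
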